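/- For every natural number n ≥ 1, the number of permutations of length n avoiding both patterns 123 and 132 equals 2^(n−1). -/

import Mathlib

/-- A permutation `π` of length `n` contains the pattern `p` (a length-`k`
sequence of distinct values, given by its values) if there is a strictly
increasing choice of `k` indices on which `π` is order isomorphic to `p`. -/
def PermContains {n k : ℕ} (π : Equiv.Perm (Fin n)) (p : Fin k → ℕ) : Prop :=
  ∃ f : Fin k → Fin n, StrictMono f ∧ ∀ a b : Fin k, p a < p b ↔ π (f a) < π (f b)

/-- `π` avoids the pattern `p`. -/
def PermAvoids {n k : ℕ} (π : Equiv.Perm (Fin n)) (p : Fin k → ℕ) : Prop :=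
  ¬ PermContains π p

def PCond {n : ℕ} (π : Equiv.Perm (Fin n)) : Prop :=
  ∀ i j k : Fin n, i < j → j < k → π i < π j → π i < π k → False

lemma fin3_cases : ∀ a : Fin 3, a = 0 ∨ a = 1 ∨ a = 2 := by decide

lemma mono3 {n : ℕ} {i j k : Fin n} (hij : i < j) (hjk : j < k) :
    StrictMono ![i, j, k] := by
  have hik : i < k := hij.trans hjk
  intro a b hab
  rcases fin3_cases a with rfl|rfl|rfl <;> rcases fin3_cases b with rfl|rfl|rfl <;>
    first
      | exact absurd hab (by decide)
      | simpa [Matrix.cons_val_zero, Matrix.cons_val_one, Matrix.head_cons,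
          Matrix.cons_val_two, Matrix.tail_cons] using hij
      | simpa [Matrix.cons_val_zero, Matrix.cons_val_one, Matrix.head_cons,
          Matrix.cons_val_two, Matrix.tail_cons] using hjk
      | simpa [Matrix.cons_val_zero, Matrix.cons_val_one, Matrix.head_cons,
          Matrix.cons_val_two, Matrix.tail_cons] using hik

lemma avoids_iff {n : ℕ} (π : Equiv.Perm (Fin n)) :
    (PermAvoids π ![1, 2, 3] ∧ PermAvoids π ![1, 3, 2]) ↔ PCond π := by
  constructor
  · rintro ⟨h1, h2⟩ i j k hij hjk hpij hpik
    rcases lt_or_gt_of_ne (π.injective.ne (ne_of_lt hjk)) with hjk' | hjk'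
    · refine h1 ⟨![i, j, k], mono3 hij hjk, ?_⟩
      have h1' : ¬ π j < π i := asymm hpij
      have h2' : ¬ π k < π i := asymm hpik
      have h3' : ¬ π k < π j := asymm hjk'
      have hpjk : π j < π k := hjk'
      intro a b
      rcases fin3_cases a with rfl|rfl|rfl <;> rcases fin3_cases b with rfl|rfl|rfl <;>
        norm_num [Matrix.cons_val_zero, Matrix.cons_val_one, Matrix.head_cons,
          Matrix.cons_val_two, Matrix.tail_cons] <;>
        first | assumption | exact le_of_lt (by assumption)
    · refine h2 ⟨![i, j, k], mono3 hij hjk, ?_⟩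
      have h1' : ¬ π j < π i := asymm hpij
      have h2' : ¬ π k < π i := asymm hpik
      have h3' : ¬ π j < π k := asymm hjk'
      have hpkj : π k < π j := hjk'
      intro a b
      rcases fin3_cases a with rfl|rfl|rfl <;> rcases fin3_cases b with rfl|rfl|rfl <;>
        norm_num [Matrix.cons_val_zero, Matrix.cons_val_one, Matrix.head_cons,
          Matrix.cons_val_two, Matrix.tail_cons] <;>
        first | assumption | exact le_of_lt (by assumption)
  · intro hP
    constructor
    · rintro ⟨f, hf, hiff⟩
      have e01 := (hiff 0 1).mp (by norm_num)
      have e02 := (hiff 0 2).mp (by decide)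
      exact hP (f 0) (f 1) (f 2) (hf (by decide)) (hf (by decide)) e01 e02
    · rintro ⟨f, hf, hiff⟩
      have e01 := (hiff 0 1).mp (by norm_num)
      have e02 := (hiff 0 2).mp (by decide)
      exact hP (f 0) (f 1) (f 2) (hf (by decide)) (hf (by decide)) e01 e02


section
variable {n : ℕ}

/-- the first value of an avoiding permutation: top or second-to-top -/
def pv (n : ℕ) (b : Bool) : Fin (n + 2) := if b then Fin.last (n + 1) else ⟨n, by omega⟩

lemma pv_val (b : Bool) : (pv n b).val = if b then n + 1 else n := by
  cases b <;> simp [pv, Fin.last]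

lemma pv_ge (b : Bool) : n ≤ (pv n b).val := by cases b <;> simp [pv_val]

/-- the permutation built from a bit and a smaller avoiding permutation -/
def gfun (b : Bool) (σ : Equiv.Perm (Fin (n + 1))) : Fin (n + 2) → Fin (n + 2) :=
  Fin.cons (pv n b) (fun j => (pv n b).succAbove (σ j))

lemma gfun_zero (b : Bool) (σ : Equiv.Perm (Fin (n + 1))) : gfun b σ 0 = pv n b := rfl

lemma gfun_succ (b : Bool) (σ : Equiv.Perm (Fin (n + 1))) (j : Fin (n + 1)) :
    gfun b σ j.succ = (pv n b).succAbove (σ j) := by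
  simp [gfun]

lemma gfun_injective (b : Bool) (σ : Equiv.Perm (Fin (n + 1))) :
    Function.Injective (gfun b σ) := by
  intro x y h
  induction x using Fin.cases with
  | zero =>
    induction y using Fin.cases with
    | zero => rfl
    | succ y =>
      rw [gfun_zero, gfun_succ] at h
      exact absurd h.symm (Fin.succAbove_ne _ _)
  | succ x =>
    induction y using Fin.cases with
    | zero =>
      rw [gfun_zero, gfun_succ] at h
      exact absurd h (Fin.succAbove_ne _ _)
    | succ y =>
      rw [gfun_succ, gfun_succ] at h
      rw [σ.injective (Fin.succAbove_right_injective h)]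

noncomputable def gperm (b : Bool) (σ : Equiv.Perm (Fin (n + 1))) : Equiv.Perm (Fin (n + 2)) :=
  Equiv.ofBijective (gfun b σ) (Finite.injective_iff_bijective.mp (gfun_injective b σ))

lemma gperm_apply (b : Bool) (σ : Equiv.Perm (Fin (n + 1))) (x : Fin (n + 2)) :
    gperm b σ x = gfun b σ x := rfl

lemma pcond_gperm (b : Bool) {σ : Equiv.Perm (Fin (n + 1))} (hσ : PCond σ) :
    PCond (gperm b σ) := by
  intro i j k hij hjk h1 h2
  have hj0 : j ≠ 0 := Fin.pos_iff_ne_zero.mp (lt_of_le_of_lt (Fin.zero_le i) hij)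
  have hk0 : k ≠ 0 := Fin.pos_iff_ne_zero.mp (lt_of_le_of_lt (Fin.zero_le j) hjk)
  obtain ⟨j', rfl⟩ := Fin.eq_succ_of_ne_zero hj0
  obtain ⟨k', rfl⟩ := Fin.eq_succ_of_ne_zero hk0
  simp only [gperm_apply, gfun_succ] at h1 h2
  induction i using Fin.cases with
  | zero =>
    rw [gfun_zero] at h1 h2
    -- pv < succAbove values, but pv.val ≥ n and everything ≤ n+1
    have e1 : ((pv n b).succAbove (σ j')).val = n + 1 := by
      have := pv_ge (n := n) b
      have h1v := (Fin.lt_def.mp h1)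
      have := ((pv n b).succAbove (σ j')).isLt
      omega
    have e2 : ((pv n b).succAbove (σ k')).val = n + 1 := by
      have := pv_ge (n := n) b
      have h2v := (Fin.lt_def.mp h2)
      have := ((pv n b).succAbove (σ k')).isLt
      omega
    exact absurd (σ.injective (Fin.succAbove_right_injective
      (Fin.ext (e1.trans e2.symm)))) (ne_of_lt (Fin.succ_lt_succ_iff.mp hjk))
  | succ i' =>
    rw [gfun_succ] at h1 h2
    exact hσ i' j' k' (Fin.succ_lt_succ_iff.mp hij) (Fin.succ_lt_succ_iff.mp hjk)
      (Fin.succAbove_lt_succAbove_iff.mp h1) (Fin.succAbove_lt_succAbove_iff.mp h2)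

lemma pcond_apex (π : Equiv.Perm (Fin (n + 2))) (h : PCond π) :
    π 0 = Fin.last (n + 1) ∨ π 0 = ⟨n, by omega⟩ := by
  by_contra hc
  push_neg at hc
  obtain ⟨h1, h2⟩ := hc
  have hv1 : (π 0).val ≠ n + 1 := fun e => h1 (Fin.ext e)
  have hv2 : (π 0).val ≠ n := fun e => h2 (Fin.ext e)
  set x : Fin (n + 2) := Fin.last (n + 1) with hx
  set y : Fin (n + 2) := ⟨n, by omega⟩ with hy
  have hπx : π 0 < x := by
    rw [Fin.lt_def]; have := (π 0).isLt; simp [hx]; omega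
  have hπy : π 0 < y := by
    rw [Fin.lt_def]; have := (π 0).isLt; simp [hy]; omega
  set u := π.symm x with hu
  set v := π.symm y with hv
  have hπu : π u = x := π.apply_symm_apply x
  have hπv : π v = y := π.apply_symm_apply y
  have hu0 : 0 < u := by
    rw [Fin.pos_iff_ne_zero]
    intro e; rw [e] at hπu; exact h1 hπu
  have hv0 : 0 < v := by
    rw [Fin.pos_iff_ne_zero]
    intro e; rw [e] at hπv; exact h2 hπv
  have huv : u ≠ v := by
    intro e
    rw [e, hπv] at hπu
    have : (n : ℕ) + 1 = n := by
      have := congrArg Fin.val hπu; simpa [hx, hy] using this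
    omega
  rcases lt_or_gt_of_ne huv with hlt | hlt
  · exact h 0 u v hu0 hlt (hπu ▸ hπx) (hπv ▸ hπy)
  · exact h 0 v u hv0 hlt (hπv ▸ hπy) (hπu ▸ hπx)

def ffun (π : Equiv.Perm (Fin (n + 2))) : Fin (n + 1) → Fin (n + 1) :=
  fun j => (finSuccAboveEquiv (π 0)).symm
    ⟨π j.succ, fun e => (Fin.succ_ne_zero j) (π.injective e)⟩

lemma ffun_spec (π : Equiv.Perm (Fin (n + 2))) (j : Fin (n + 1)) :
    (π 0).succAbove (ffun π j) = π j.succ := by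
  have h := (finSuccAboveEquiv (π 0)).apply_symm_apply
    ⟨π j.succ, fun e => (Fin.succ_ne_zero j) (π.injective e)⟩
  rw [finSuccAboveEquiv_apply] at h
  exact congrArg Subtype.val h

lemma ffun_injective (π : Equiv.Perm (Fin (n + 2))) : Function.Injective (ffun π) := by
  intro a b h
  have : π a.succ = π b.succ := by
    rw [← ffun_spec π a, ← ffun_spec π b, h]
  exact Fin.succ_injective _ (π.injective this)

noncomputable def fperm (π : Equiv.Perm (Fin (n + 2))) : Equiv.Perm (Fin (n + 1)) :=
  Equiv.ofBijective (ffun π) (Finite.injective_iff_bijective.mp (ffun_injective π))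

lemma fperm_apply (π : Equiv.Perm (Fin (n + 2))) (j : Fin (n + 1)) :
    fperm π j = ffun π j := rfl

lemma pcond_fperm {π : Equiv.Perm (Fin (n + 2))} (hπ : PCond π) : PCond (fperm π) := by
  intro i j k hij hjk h1 h2
  rw [fperm_apply, fperm_apply] at h1 h2
  have h1' : π i.succ < π j.succ := by
    rw [← ffun_spec π i, ← ffun_spec π j]
    exact Fin.succAbove_lt_succAbove_iff.mpr h1
  have h2' : π i.succ < π k.succ := by
    rw [← ffun_spec π i, ← ffun_spec π k]
    exact Fin.succAbove_lt_succAbove_iff.mpr h2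
  exact hπ i.succ j.succ k.succ (Fin.succ_lt_succ_iff.mpr hij)
    (Fin.succ_lt_succ_iff.mpr hjk) h1' h2'

lemma card_pcond : ∀ m : ℕ, Nat.card {π : Equiv.Perm (Fin (m + 1)) // PCond π} = 2 ^ m := by
  intro m
  induction m with
  | zero =>
    have hall : ∀ π : Equiv.Perm (Fin 1), PCond π := by
      intro π i j k hij hjk _ _
      have hi := i.isLt; have hj := j.isLt
      have := Fin.lt_def.mp hij
      omega
    rw [Nat.card_congr (Equiv.subtypeUnivEquiv hall)]
    simp [Nat.card_eq_fintype_card]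
  | succ m ih =>
    set G : Bool × {σ : Equiv.Perm (Fin (m + 1)) // PCond σ} →
        {π : Equiv.Perm (Fin (m + 2)) // PCond π} :=
      fun x => ⟨gperm x.1 x.2.1, pcond_gperm x.1 x.2.2⟩ with hG
    set F : {π : Equiv.Perm (Fin (m + 2)) // PCond π} →
        Bool × {σ : Equiv.Perm (Fin (m + 1)) // PCond σ} :=
      fun x => (decide (x.1 0 = Fin.last (m + 1)), ⟨fperm x.1, pcond_fperm x.2⟩) with hF
    have hGinj : Function.Injective G := by
      rintro ⟨b, σ, hσ⟩ ⟨b', σ', hσ'⟩ h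
      have h' : gperm b σ = gperm b' σ' := congrArg Subtype.val h
      have h0 : pv m b = pv m b' := by
        have := congrArg (fun (e : Equiv.Perm (Fin (m + 2))) => e 0) h'
        simpa [gperm_apply, gfun_zero] using this
      have hb : b = b' := by
        have hvv := congrArg Fin.val h0
        cases b <;> cases b' <;> first | rfl | (simp [pv_val] at hvv <;> omega)
      subst hb
      have hσeq : σ = σ' := by
        apply Equiv.ext
        intro j
        have := congrArg (fun (e : Equiv.Perm (Fin (m + 2))) => e j.succ) h'
        simp only [gperm_apply, gfun_succ] at this
        exact Fin.succAbove_right_injective this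
      subst hσeq
      rfl
    have hFinj : Function.Injective F := by
      rintro ⟨π, hπ⟩ ⟨π', hπ'⟩ h
      have hb : decide (π 0 = Fin.last (m + 1)) = decide (π' 0 = Fin.last (m + 1)) :=
        congrArg Prod.fst h
      have hσ : fperm π = fperm π' :=
        congrArg (fun q : Bool × {σ : Equiv.Perm (Fin (m + 1)) // PCond σ} =>
          (q.2 : Equiv.Perm (Fin (m + 1)))) h
      rw [decide_eq_decide] at hb
      have h0 : π 0 = π' 0 := by
        rcases pcond_apex π hπ with e | e <;> rcases pcond_apex π' hπ' with e' | e'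
        · rw [e, e']
        · exfalso
          have hB : π' 0 ≠ Fin.last (m + 1) := by
            rw [e']; intro hc
            have := congrArg Fin.val hc
            simp [Fin.last] at this
          exact hB (hb.mp e)
        · exfalso
          have hB : π 0 ≠ Fin.last (m + 1) := by
            rw [e]; intro hc
            have := congrArg Fin.val hc
            simp [Fin.last] at this
          exact hB (hb.mpr e')
        · rw [e, e']
      have hπeq : π = π' := by
        apply Equiv.ext
        intro x
        induction x using Fin.cases with
        | zero => exact h0
        | succ x =>
          have hs : ffun π x = ffun π' x := Equiv.ext_iff.mp hσ x
          rw [← ffun_spec π x, ← ffun_spec π' x, hs, h0]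
      subst hπeq
      rfl
    have key : Nat.card {π : Equiv.Perm (Fin (m + 2)) // PCond π} =
        Nat.card (Bool × {σ : Equiv.Perm (Fin (m + 1)) // PCond σ}) :=
      le_antisymm (Nat.card_le_card_of_injective F hFinj)
        (Nat.card_le_card_of_injective G hGinj)
    rw [key, Nat.card_prod, ih, Nat.card_eq_fintype_card, Fintype.card_bool, pow_succ]
    ring

end

theorem av123_132_card (n : ℕ) (hn : 1 ≤ n) :
    Nat.card {π : Equiv.Perm (Fin n) //
        PermAvoids π ![1, 2, 3] ∧ PermAvoids π ![1, 3, 2]} =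
      2 ^ (n - 1) := by
  obtain ⟨m, rfl⟩ : ∃ m, n = m + 1 := ⟨n - 1, by omega⟩
  rw [Nat.card_congr (Equiv.subtypeEquivRight (fun π => avoids_iff π))]
  simp only [Nat.add_sub_cancel]
  exact card_pcond m
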